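/- For a cartesian category S with weak pullbacks, the weak-subobjects doctrine Ψ : S^op → InfSL has weak full comprehensions and satisfies the rule of choice: for every α ∈ Ψ(A×B) with ⊤_A ≤ ∃_{pr1}(α) there exists an arrow w : A → B of S with ⊤_A ≤ Ψ_{⟨id_A,w⟩}(α). Consequently the functor L : Q_Ψ → E_Ψ is full (and an equivalence). -/

import Mathlib

open CategoryTheory CategoryTheory.Limits

universe u v

/-- A choice of weak pullbacks: for every cospan a weakly universal cone. -/
structure WeakPullbacks (S : Type u) [Category.{v} S] where
  obj : ∀ {X Y Z : S}, (X ⟶ Z) → (Y ⟶ Z) → S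
  fst : ∀ {X Y Z : S} (f : X ⟶ Z) (g : Y ⟶ Z), obj f g ⟶ X
  snd : ∀ {X Y Z : S} (f : X ⟶ Z) (g : Y ⟶ Z), obj f g ⟶ Y
  comm : ∀ {X Y Z : S} (f : X ⟶ Z) (g : Y ⟶ Z), fst f g ≫ f = snd f g ≫ g
  lift : ∀ {X Y Z V : S} {f : X ⟶ Z} {g : Y ⟶ Z} (a : V ⟶ X) (b : V ⟶ Y),
    a ≫ f = b ≫ g → (V ⟶ obj f g)
  lift_fst : ∀ {X Y Z V : S} {f : X ⟶ Z} {g : Y ⟶ Z} (a : V ⟶ X) (b : V ⟶ Y)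
    (h : a ≫ f = b ≫ g), lift a b h ≫ fst f g = a
  lift_snd : ∀ {X Y Z V : S} {f : X ⟶ Z} {g : Y ⟶ Z} (a : V ⟶ X) (b : V ⟶ Y)
    (h : a ≫ f = b ≫ g), lift a b h ≫ snd f g = b

variable {S : Type u} [Category.{v} S]

/-- Representatives of weak subobjects of `A`: arrows into `A`. The fibre
`Ψ(A)` is the poset reflection of this preordered type. -/
def Om (A : S) := Σ X : S, X ⟶ A


/-- The weak-subobject preorder: `f ≤ g` iff `f` factors through `g`.
The poset reflection of this preorder is the fibre `Ψ(A)`. -/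
def wle {A : S} (f g : Om A) : Prop := ∃ k : f.1 ⟶ g.1, k ≫ g.2 = f.2

/-- Reindexing `Ψ_h`, computed by weak pullback along `h`. -/
noncomputable def wreindex (W : WeakPullbacks S) {A B : S} (h : B ⟶ A) (f : Om A) :
    Om B := ⟨W.obj f.2 h, W.snd f.2 h⟩

/-- Binary meet in the fibre, computed by weak pullback. -/
noncomputable def wmeet (W : WeakPullbacks S) {A : S} (f g : Om A) : Om A :=
  ⟨W.obj f.2 g.2, W.fst f.2 g.2 ≫ f.2⟩

/-- The left adjoint `∃_h`, computed by post-composition. -/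
def wpush {A B : S} (h : A ⟶ B) (f : Om A) : Om B := ⟨f.1, f.2 ≫ h⟩

attribute [reducible] Om wreindex wmeet wpush

attribute [local simp] prod.lift_fst prod.lift_snd prod.lift_fst_assoc prod.lift_snd_assoc

variable [HasBinaryProducts S]

/-- A `Ψ`-equivalence relation on `A` (reflexive, symmetric, transitive),
stated on representatives. -/
noncomputable def OmEqRel (W : WeakPullbacks S) {A : S} (ρ : Om (A ⨯ A)) : Prop :=
  wle ⟨A, diag A⟩ ρ ∧
  wle ρ (wreindex W (prod.lift prod.snd prod.fst) ρ) ∧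
  wle (wmeet W (wreindex W (prod.fst : (A ⨯ A) ⨯ A ⟶ A ⨯ A) ρ)
        (wreindex W (prod.lift (prod.fst ≫ prod.snd) prod.snd) ρ))
      (wreindex W (prod.lift (prod.fst ≫ prod.fst) prod.snd) ρ)

/-- Conditions (ii)–(v) for arrows `φ : (A,ρ) → (B,σ)` of `E_Ψ`. -/
noncomputable def OmIsArrow (W : WeakPullbacks S) {A B : S}
    (ρ : Om (A ⨯ A)) (σ : Om (B ⨯ B)) (φ : Om (A ⨯ B)) : Prop :=
  wle (wmeet W (wreindex W (prod.fst : (A ⨯ A) ⨯ B ⟶ A ⨯ A) ρ)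
        (wreindex W (prod.lift (prod.fst ≫ prod.snd) prod.snd) φ))
      (wreindex W (prod.lift (prod.fst ≫ prod.fst) prod.snd) φ) ∧
  wle (wmeet W (wreindex W (prod.fst : (A ⨯ B) ⨯ B ⟶ A ⨯ B) φ)
        (wreindex W (prod.lift (prod.fst ≫ prod.snd) prod.snd) σ))
      (wreindex W (prod.lift (prod.fst ≫ prod.fst) prod.snd) φ) ∧
  wle (wmeet W (wreindex W (prod.fst : (A ⨯ B) ⨯ B ⟶ A ⨯ B) φ)
        (wreindex W (prod.lift (prod.fst ≫ prod.fst) prod.snd) φ))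
      (wreindex W (prod.lift (prod.fst ≫ prod.snd) prod.snd) σ) ∧
  wle ⟨A, 𝟙 A⟩ (wpush prod.fst φ)

/-- The graph relation `L[f]`, stated on representatives. -/
noncomputable def OmLrel (W : WeakPullbacks S) {A B : S} (f : A ⟶ B)
    (ρ : Om (A ⨯ A)) (σ : Om (B ⨯ B)) : Om (A ⨯ B) :=
  wpush (prod.lift (prod.fst ≫ prod.fst) prod.snd)
    (wmeet W (wreindex W (prod.fst : (A ⨯ A) ⨯ B ⟶ A ⨯ A) ρ)
      (wreindex W (prod.lift (prod.fst ≫ prod.snd ≫ f) prod.snd) σ))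

attribute [reducible] OmLrel

/-- Intro rule for reindexing: a factorisation through `α` over `h` gives
`x ≤ Ψ_h α`. -/
lemma wle_reindex_intro (W : WeakPullbacks S) {A B : S} (h : B ⟶ A) (α : Om A)
    (x : Om B) (u : x.1 ⟶ α.1) (hu : u ≫ α.2 = x.2 ≫ h) :
    wle x (wreindex W h α) :=
  ⟨W.lift u x.2 hu, W.lift_snd u x.2 hu⟩

/-- Elementwise elimination of an inequality `Ψ_a β ∧ Ψ_b γ ≤ Ψ_c δ`. -/
lemma meet_wle_elim (W : WeakPullbacks S) {T P Q R : S}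
    {β : Om P} {γ : Om Q} {δ : Om R}
    {a : T ⟶ P} {b : T ⟶ Q} {c : T ⟶ R}
    (H : wle (wmeet W (wreindex W a β) (wreindex W b γ)) (wreindex W c δ))
    {V : S} (m : V ⟶ T) (p : V ⟶ β.1) (q : V ⟶ γ.1)
    (hp : p ≫ β.2 = m ≫ a) (hq : q ≫ γ.2 = m ≫ b) :
    ∃ r : V ⟶ δ.1, r ≫ δ.2 = m ≫ c := by
  obtain ⟨k, hk⟩ := H
  have hk' : k ≫ W.snd δ.2 c =
      W.fst (W.snd β.2 a) (W.snd γ.2 b) ≫ W.snd β.2 a := hk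
  have hβ : W.lift p m hp ≫ W.snd β.2 a = m := W.lift_snd _ _ _
  have hγ : W.lift q m hq ≫ W.snd γ.2 b = m := W.lift_snd _ _ _
  have hc : W.lift p m hp ≫ W.snd β.2 a = W.lift q m hq ≫ W.snd γ.2 b := by
    rw [hβ, hγ]
  have key : (W.lift (W.lift p m hp) (W.lift q m hq) hc ≫ k) ≫ W.snd δ.2 c
      = m := by
    rw [Category.assoc, hk', ← Category.assoc, W.lift_fst, hβ]
  refine ⟨(W.lift (W.lift p m hp) (W.lift q m hq) hc ≫ k) ≫ W.fst δ.2 c, ?_⟩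
  rw [Category.assoc, W.comm δ.2 c, ← Category.assoc, key]

/-- Elementwise introduction of a generalized element of `Ψ_a β ∧ Ψ_b γ`. -/
lemma meet_intro (W : WeakPullbacks S) {T P Q V : S} (β : Om P) (γ : Om Q)
    (a : T ⟶ P) (b : T ⟶ Q) (m : V ⟶ T) (p : V ⟶ β.1) (q : V ⟶ γ.1)
    (hp : p ≫ β.2 = m ≫ a) (hq : q ≫ γ.2 = m ≫ b) :
    ∃ w : V ⟶ (wmeet W (wreindex W a β) (wreindex W b γ)).1,
      w ≫ (wmeet W (wreindex W a β) (wreindex W b γ)).2 = m := by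
  have hc : W.lift p m hp ≫ W.snd β.2 a = W.lift q m hq ≫ W.snd γ.2 b := by
    rw [W.lift_snd, W.lift_snd]
  refine ⟨W.lift (W.lift p m hp) (W.lift q m hq) hc, ?_⟩
  show W.lift (W.lift p m hp) (W.lift q m hq) hc ≫
      (W.fst (W.snd β.2 a) (W.snd γ.2 b) ≫ W.snd β.2 a) = m
  rw [← Category.assoc, W.lift_fst, W.lift_snd]

/-- Elementwise elimination: the tautological element of `Ψ_a β ∧ Ψ_b γ`. -/
lemma meet_elem (W : WeakPullbacks S) {T P Q : S} (β : Om P) (γ : Om Q)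
    (a : T ⟶ P) (b : T ⟶ Q) :
    ∃ (p : (wmeet W (wreindex W a β) (wreindex W b γ)).1 ⟶ β.1)
      (q : (wmeet W (wreindex W a β) (wreindex W b γ)).1 ⟶ γ.1),
      p ≫ β.2 = (wmeet W (wreindex W a β) (wreindex W b γ)).2 ≫ a ∧
      q ≫ γ.2 = (wmeet W (wreindex W a β) (wreindex W b γ)).2 ≫ b := by
  refine ⟨W.fst (W.snd β.2 a) (W.snd γ.2 b) ≫ W.fst β.2 a,
    W.snd (W.snd β.2 a) (W.snd γ.2 b) ≫ W.fst γ.2 b, ?_, ?_⟩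
  · show (W.fst (W.snd β.2 a) (W.snd γ.2 b) ≫ W.fst β.2 a) ≫ β.2 =
      (W.fst (W.snd β.2 a) (W.snd γ.2 b) ≫ W.snd β.2 a) ≫ a
    rw [Category.assoc, W.comm β.2 a, Category.assoc]
  · show (W.snd (W.snd β.2 a) (W.snd γ.2 b) ≫ W.fst γ.2 b) ≫ γ.2 =
      (W.fst (W.snd β.2 a) (W.snd γ.2 b) ≫ W.snd β.2 a) ≫ b
    rw [W.comm (W.snd β.2 a) (W.snd γ.2 b), Category.assoc, W.comm γ.2 b,
      Category.assoc]

/-- the weak-subobjects doctrine `Ψ` of a cartesian category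
with weak pullbacks has weak full comprehensions and satisfies the rule of
choice; consequently the canonical functor `L : Q_Ψ → E_Ψ` is full (every
functional relation between `Ψ`-equivalence relations is, up to the poset
reflection, the graph `L[f]` of some map `f`). -/
theorem weak_subobjects_choice_and_L_full
    (S : Type u) [Category.{v} S] [HasBinaryProducts S] (W : WeakPullbacks S) :
    -- weak comprehension of `α = [g : X → A]` is `g` itself
    (∀ (A : S) (α : Om A), wle ⟨α.1, 𝟙 α.1⟩ (wreindex W α.2 α)) ∧
    (∀ (A : S) (α : Om A) (Z : S) (f : Z ⟶ A),
      wle ⟨Z, 𝟙 Z⟩ (wreindex W f α) → ∃ h : Z ⟶ α.1, h ≫ α.2 = f) ∧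
    -- weak comprehensions are full
    (∀ (A : S) (α β : Om A), (∃ h : α.1 ⟶ β.1, h ≫ β.2 = α.2) → wle α β) ∧
    -- rule of choice
    (∀ (A B : S) (α : Om (A ⨯ B)), wle ⟨A, 𝟙 A⟩ (wpush prod.fst α) →
      ∃ w : A ⟶ B, wle ⟨A, 𝟙 A⟩ (wreindex W (prod.lift (𝟙 A) w) α)) ∧
    -- consequently `L : Q_Ψ → E_Ψ` is full
    (∀ (A B : S) (ρ : Om (A ⨯ A)) (σ : Om (B ⨯ B)),
      OmEqRel W ρ → OmEqRel W σ →
      ∀ φ : Om (A ⨯ B), OmIsArrow W ρ σ φ →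
      ∃ f : A ⟶ B,
        wle ρ (wreindex W (prod.map f f) σ) ∧
        wle (OmLrel W f ρ σ) φ ∧ wle φ (OmLrel W f ρ σ)) := by
  refine ⟨?_, ?_, ?_, ?_, ?_⟩
  · -- weak comprehension
    intro A α
    exact ⟨W.lift (𝟙 α.1) (𝟙 α.1) rfl, W.lift_snd _ _ _⟩
  · -- universal property of weak comprehension
    intro A α Z f h
    obtain ⟨k, hk⟩ := h
    have hk' : k ≫ W.snd α.2 f = 𝟙 Z := hk
    refine ⟨k ≫ W.fst α.2 f, ?_⟩
    rw [Category.assoc, W.comm α.2 f, ← Category.assoc, hk', Category.id_comp]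
  · -- fullness of comprehensions
    intro A α β h
    exact h
  · -- rule of choice
    intro A B α h
    obtain ⟨k, hk⟩ := h
    have hk' : k ≫ α.2 ≫ prod.fst = 𝟙 A := hk
    refine ⟨k ≫ α.2 ≫ prod.snd, ?_⟩
    refine wle_reindex_intro W (prod.lift (𝟙 A) (k ≫ α.2 ≫ prod.snd)) α ⟨A, 𝟙 A⟩ k ?_
    apply Limits.prod.hom_ext
    · simpa using hk'
    · simp
  · -- L is full
    intro A B ρ σ hρ hσ φ hφ
    obtain ⟨hii, hiii, hiv, hv⟩ := hφ
    obtain ⟨k, hk⟩ := hv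
    have hk1 : k ≫ φ.2 ≫ prod.fst = 𝟙 A := hk
    obtain ⟨r0, hr0⟩ := hρ.1
    have hr0f : r0 ≫ ρ.2 ≫ prod.fst = 𝟙 A := by
      rw [← Category.assoc, hr0]; simp
    have hr0s : r0 ≫ ρ.2 ≫ prod.snd = 𝟙 A := by
      rw [← Category.assoc, hr0]; simp
    have hL2 : (OmLrel W (k ≫ φ.2 ≫ prod.snd) ρ σ).2 =
        (wmeet W (wreindex W (prod.fst : (A ⨯ A) ⨯ B ⟶ A ⨯ A) ρ)
          (wreindex W (prod.lift (prod.fst ≫ prod.snd ≫ (k ≫ φ.2 ≫ prod.snd))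
            prod.snd) σ)).2 ≫ prod.lift (prod.fst ≫ prod.fst) prod.snd := rfl
    refine ⟨k ≫ φ.2 ≫ prod.snd, ?_, ?_, ?_⟩
    · -- ρ ≤ (f×f)* σ
      obtain ⟨r, hr⟩ := meet_wle_elim W hii
        (prod.lift ρ.2 ((ρ.2 ≫ prod.snd) ≫ k ≫ φ.2 ≫ prod.snd))
        (𝟙 ρ.1) ((ρ.2 ≫ prod.snd) ≫ k)
        (by simp) (by apply Limits.prod.hom_ext <;> simp [hk1])
      obtain ⟨u, hu⟩ := meet_wle_elim W hiv
        (prod.lift (prod.lift (ρ.2 ≫ prod.fst)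
            ((ρ.2 ≫ prod.fst) ≫ k ≫ φ.2 ≫ prod.snd))
          ((ρ.2 ≫ prod.snd) ≫ k ≫ φ.2 ≫ prod.snd))
        ((ρ.2 ≫ prod.fst) ≫ k) r
        (by apply Limits.prod.hom_ext <;> simp [hk1])
        (by rw [hr]; apply Limits.prod.hom_ext <;> simp)
      apply wle_reindex_intro W _ _ _ u
      rw [hu]
      apply Limits.prod.hom_ext <;> simp
    · -- L[f] ≤ φ
      obtain ⟨p, q, hp, hq⟩ := meet_elem W ρ σ
        (prod.fst : (A ⨯ A) ⨯ B ⟶ A ⨯ A)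
        (prod.lift (prod.fst ≫ prod.snd ≫ (k ≫ φ.2 ≫ prod.snd)) prod.snd)
      set m := (wmeet W (wreindex W (prod.fst : (A ⨯ A) ⨯ B ⟶ A ⨯ A) ρ)
        (wreindex W (prod.lift (prod.fst ≫ prod.snd ≫ (k ≫ φ.2 ≫ prod.snd))
          prod.snd) σ)).2 with hm
      obtain ⟨r₁, hr₁⟩ := meet_wle_elim W hii
        (prod.lift (m ≫ prod.fst)
          ((m ≫ prod.fst ≫ prod.snd) ≫ k ≫ φ.2 ≫ prod.snd))
        p ((m ≫ prod.fst ≫ prod.snd) ≫ k)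
        (by rw [hp]; simp) (by apply Limits.prod.hom_ext <;> simp [hk1])
      obtain ⟨r₂, hr₂⟩ := meet_wle_elim W hiii
        (prod.lift (prod.lift (m ≫ prod.fst ≫ prod.fst)
            ((m ≫ prod.fst ≫ prod.snd) ≫ k ≫ φ.2 ≫ prod.snd))
          (m ≫ prod.snd))
        r₁ q
        (by rw [hr₁]; apply Limits.prod.hom_ext <;> simp)
        (by rw [hq]; apply Limits.prod.hom_ext <;> simp)
      refine ⟨r₂, ?_⟩
      rw [hL2, hr₂]
      apply Limits.prod.hom_ext <;> simp
    · -- φ ≤ L[f]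
      obtain ⟨s, hs⟩ := meet_wle_elim W hiv
        (prod.lift (prod.lift (φ.2 ≫ prod.fst)
            ((φ.2 ≫ prod.fst) ≫ k ≫ φ.2 ≫ prod.snd))
          (φ.2 ≫ prod.snd))
        ((φ.2 ≫ prod.fst) ≫ k) (𝟙 φ.1)
        (by apply Limits.prod.hom_ext <;> simp [hk1])
        (by apply Limits.prod.hom_ext <;> simp)
      obtain ⟨w, hw⟩ := meet_intro W ρ σ
        (prod.fst : (A ⨯ A) ⨯ B ⟶ A ⨯ A)
        (prod.lift (prod.fst ≫ prod.snd ≫ (k ≫ φ.2 ≫ prod.snd)) prod.snd)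
        (prod.lift (prod.lift (φ.2 ≫ prod.fst) (φ.2 ≫ prod.fst))
          (φ.2 ≫ prod.snd))
        ((φ.2 ≫ prod.fst) ≫ r0) s
        (by apply Limits.prod.hom_ext <;> simp [hr0f, hr0s])
        (by rw [hs]; apply Limits.prod.hom_ext <;> simp)
      refine ⟨w, ?_⟩
      rw [hL2, ← Category.assoc, hw]
      apply Limits.prod.hom_ext <;> simp
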